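/- For every ε > 0 there is a constant C such that for all positive integers n, r₃(n) ≤ C n^{1/2+ε}, where r₃(n) = #{(n₁,n₂,n₃) ∈ ℤ³ : n₁² + n₂² + n₃² = n}. -/

import Mathlib

open Finset Zsqrtd GaussianInt

/-- Solutions to `a² + b² = m` (all lie in the box `[-m,m]²`). -/
noncomputable def sol (m : ℕ) : Finset (ℤ × ℤ) :=
  ((Finset.Icc (-(m : ℤ)) (m : ℤ)) ×ˢ (Finset.Icc (-(m : ℤ)) (m : ℤ))).filter
    (fun t => t.1 ^ 2 + t.2 ^ 2 = (m : ℤ))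

lemma int_le_sq (a : ℤ) : a ≤ a ^ 2 := by
  rcases le_or_gt a 0 with h | h
  · exact h.trans (sq_nonneg a)
  · have h1 : (1 : ℤ) ≤ a := h
    calc a = a * 1 := (mul_one a).symm
    _ ≤ a * a := mul_le_mul_of_nonneg_left h1 h.le
    _ = a ^ 2 := (sq a).symm

lemma bounds_of_sq_le {a m : ℤ} (h : a ^ 2 ≤ m) : -m ≤ a ∧ a ≤ m := by
  have h1 := int_le_sq a
  have h2 := int_le_sq (-a)
  rw [neg_pow] at h2
  constructor <;> nlinarith

lemma mem_sol {m : ℕ} {t : ℤ × ℤ} : t ∈ sol m ↔ t.1 ^ 2 + t.2 ^ 2 = (m : ℤ) := by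
  simp only [sol, Finset.mem_filter, Finset.mem_product, Finset.mem_Icc]
  constructor
  · tauto
  · intro h
    have h1 : t.1 ^ 2 ≤ (m : ℤ) := by nlinarith [sq_nonneg t.2]
    have h2 : t.2 ^ 2 ≤ (m : ℤ) := by nlinarith [sq_nonneg t.1]
    exact ⟨⟨⟨(bounds_of_sq_le h1).1, (bounds_of_sq_le h1).2⟩,
      ⟨(bounds_of_sq_le h2).1, (bounds_of_sq_le h2).2⟩⟩, h⟩

/-- Descent at the prime 2. -/
lemma sol_card_le_of_two {k : ℕ} : (sol (2 * k)).card ≤ (sol k).card := by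
  apply Finset.card_le_card_of_injOn (fun t => ((t.1 + t.2) / 2, (t.1 - t.2) / 2))
  · intro t ht
    rw [Finset.mem_coe, mem_sol] at ht ⊢
    obtain ⟨a, b⟩ := t
    simp only at ht ⊢
    have hev : Even (a + b) := by
      have h2 : Even ((a + b) ^ 2) := ⟨(k : ℤ) + a * b, by push_cast at ht ⊢; ring_nf; linarith⟩
      exact (Int.even_pow.mp h2).1
    obtain ⟨c, hc⟩ := hev
    have hd : a - b = 2 * (c - b) := by omega
    have hc' : a + b = 2 * c := by omega
    rw [hc', hd]
    have e1 : (2 * c) / 2 = c := by omega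
    have e2 : (2 * (c - b)) / 2 = c - b := by omega
    rw [e1, e2]
    push_cast at ht ⊢
    have ha : a = 2 * c - b := by omega
    subst ha
    have h2 : 2 * (c ^ 2 + (c - b) ^ 2) = 2 * (k : ℤ) := by ring_nf; ring_nf at ht; linarith
    linarith
  · intro t1 h1 t2 h2 h
    simp only [Finset.mem_coe, mem_sol] at h1 h2
    obtain ⟨a1, b1⟩ := t1; obtain ⟨a2, b2⟩ := t2
    simp only [Prod.mk.injEq] at h ⊢
    -- recover evenness to invert the division
    have he1 : Even (a1 + b1) := by
      have : Even ((a1 + b1) ^ 2) := ⟨(k : ℤ) + a1 * b1, by push_cast at h1 ⊢; ring_nf; linarith⟩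
      exact (Int.even_pow.mp this).1
    have he2 : Even (a2 + b2) := by
      have : Even ((a2 + b2) ^ 2) := ⟨(k : ℤ) + a2 * b2, by push_cast at h2 ⊢; ring_nf; linarith⟩
      exact (Int.even_pow.mp this).1
    obtain ⟨c1, hc1⟩ := he1; obtain ⟨c2, hc2⟩ := he2
    obtain ⟨hA, hB⟩ := h
    omega

/-- For `p ≡ 3 [MOD 4]` prime, `p ∣ a² + b²` forces `p ∣ a` and `p ∣ b`. -/
lemma dvd_of_dvd_sq_add_sq {p : ℕ} (hp : p.Prime) (h3 : p % 4 = 3) {a b : ℤ}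
    (h : (p : ℤ) ∣ a ^ 2 + b ^ 2) : (p : ℤ) ∣ a ∧ (p : ℤ) ∣ b := by
  haveI : Fact p.Prime := ⟨hp⟩
  have hz : ((a : ZMod p)) ^ 2 + ((b : ZMod p)) ^ 2 = 0 := by
    have := (ZMod.intCast_zmod_eq_zero_iff_dvd (a ^ 2 + b ^ 2) p).mpr h
    push_cast at this
    exact this
  have hb : (b : ZMod p) = 0 := by
    by_contra hb
    have hsq : ((a : ZMod p) * (b : ZMod p)⁻¹) ^ 2 = -1 := by
      have hbi : (b : ZMod p) * (b : ZMod p)⁻¹ = 1 := ZMod.mul_inv_of_unit _ (Ne.isUnit hb)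
      have ha2 : ((a : ZMod p)) ^ 2 = -((b : ZMod p)) ^ 2 := by linear_combination hz
      calc ((a : ZMod p) * (b : ZMod p)⁻¹) ^ 2
          = ((a : ZMod p)) ^ 2 * ((b : ZMod p)⁻¹) ^ 2 := by ring
        _ = -(((b : ZMod p)) ^ 2 * ((b : ZMod p)⁻¹) ^ 2) := by rw [ha2]; ring
        _ = -(((b : ZMod p) * (b : ZMod p)⁻¹) ^ 2) := by ring
        _ = -1 := by rw [hbi]; norm_num
    have : IsSquare (-1 : ZMod p) := ⟨(a : ZMod p) * (b : ZMod p)⁻¹, by rw [← hsq]; ring⟩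
    exact (ZMod.exists_sq_eq_neg_one_iff.mp this) h3
  have ha : (a : ZMod p) = 0 := by
    have : ((a : ZMod p)) ^ 2 = 0 := by rw [hb] at hz; simpa using hz
    exact pow_eq_zero_iff (n := 2) (by norm_num) |>.mp this
  exact ⟨(ZMod.intCast_zmod_eq_zero_iff_dvd a p).mp ha,
    (ZMod.intCast_zmod_eq_zero_iff_dvd b p).mp hb⟩

lemma sol_card_le_of_three_mod_four {p k : ℕ} (hp : p.Prime) (h3 : p % 4 = 3) :
    (sol (p ^ 2 * k)).card ≤ (sol k).card := by
  apply Finset.card_le_card_of_injOn (fun t => (t.1 / (p : ℤ), t.2 / (p : ℤ)))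
  · intro t ht
    simp only [Finset.mem_coe, mem_sol] at ht ⊢
    obtain ⟨a, b⟩ := t
    simp only at ht ⊢
    have hdvd : (p : ℤ) ∣ a ∧ (p : ℤ) ∣ b := by
      apply dvd_of_dvd_sq_add_sq hp h3
      rw [ht]; push_cast; exact ⟨(p : ℤ) * (k : ℤ), by ring⟩
    obtain ⟨⟨a', rfl⟩, ⟨b', rfl⟩⟩ := hdvd
    have hp0 : (p : ℤ) ≠ 0 := by exact_mod_cast hp.pos.ne'
    rw [Int.mul_ediv_cancel_left _ hp0, Int.mul_ediv_cancel_left _ hp0]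
    push_cast at ht
    have : (p : ℤ) ^ 2 * (a' ^ 2 + b' ^ 2) = (p : ℤ) ^ 2 * k := by linear_combination ht
    exact mul_left_cancel₀ (pow_ne_zero 2 hp0) this
  · intro t1 h1 t2 h2 h
    simp only [Finset.mem_coe, mem_sol] at h1 h2
    obtain ⟨a1, b1⟩ := t1; obtain ⟨a2, b2⟩ := t2
    have hd1 : (p : ℤ) ∣ a1 ∧ (p : ℤ) ∣ b1 := by
      apply dvd_of_dvd_sq_add_sq hp h3
      rw [h1]; push_cast; exact ⟨(p : ℤ) * (k : ℤ), by ring⟩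
    have hd2 : (p : ℤ) ∣ a2 ∧ (p : ℤ) ∣ b2 := by
      apply dvd_of_dvd_sq_add_sq hp h3
      rw [h2]; push_cast; exact ⟨(p : ℤ) * (k : ℤ), by ring⟩
    obtain ⟨⟨a1', rfl⟩, ⟨b1', rfl⟩⟩ := hd1
    obtain ⟨⟨a2', rfl⟩, ⟨b2', rfl⟩⟩ := hd2
    have hp0 : (p : ℤ) ≠ 0 := by exact_mod_cast hp.pos.ne'
    simp only [Prod.mk.injEq, Int.mul_ediv_cancel_left _ hp0] at h
    simp [h.1, h.2]

lemma sol_eq_empty_of_three_mod_four {p m : ℕ} (hp : p.Prime) (h3 : p % 4 = 3)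
    (hpm : p ∣ m) (hnd : ¬ p ^ 2 ∣ m) : sol m = ∅ := by
  rw [Finset.eq_empty_iff_forall_notMem]
  intro t ht
  rw [mem_sol] at ht
  have hdvd : (p : ℤ) ∣ t.1 ∧ (p : ℤ) ∣ t.2 := by
    apply dvd_of_dvd_sq_add_sq hp h3
    rw [ht]; exact_mod_cast Int.natCast_dvd_natCast.mpr hpm
  obtain ⟨⟨a', ha⟩, ⟨b', hb⟩⟩ := hdvd
  apply hnd
  have : ((p : ℤ)) ^ 2 ∣ (m : ℤ) := ⟨a' ^ 2 + b' ^ 2, by rw [← ht, ha, hb]; ring⟩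
  exact_mod_cast this

namespace R3Aux

open GaussianInt Zsqrtd

lemma norm_nonneg' (z : GaussianInt) : 0 ≤ z.norm := Zsqrtd.norm_nonneg (by norm_num) z

lemma unit_cases {u : GaussianInt} (h : IsUnit u) :
    (u.re = 1 ∧ u.im = 0) ∨ (u.re = -1 ∧ u.im = 0) ∨
    (u.re = 0 ∧ u.im = 1) ∨ (u.re = 0 ∧ u.im = -1) := by
  have h1 : u.norm.natAbs = 1 := Zsqrtd.norm_eq_one_iff.mpr h
  have h2 : u.norm = 1 := by
    have := norm_nonneg' u
    omega
  rw [Zsqrtd.norm_def] at h2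
  have hsq : u.re * u.re + u.im * u.im = 1 := by linarith
  have hr : -1 ≤ u.re ∧ u.re ≤ 1 := by
    have := bounds_of_sq_le (m := 1) (a := u.re) (by nlinarith [mul_self_nonneg u.im])
    simpa [sq] using this
  have hi : -1 ≤ u.im ∧ u.im ≤ 1 := by
    have := bounds_of_sq_le (m := 1) (a := u.im) (by nlinarith [mul_self_nonneg u.re])
    simpa [sq] using this
  obtain ⟨hr1, hr2⟩ := hr; obtain ⟨hi1, hi2⟩ := hi
  set a := u.re; set b := u.im
  interval_cases a <;> interval_cases b <;> simp_all

set_option synthInstance.maxHeartbeats 1000000 in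
lemma prime_of_norm_prime {π : GaussianInt} (hp : Nat.Prime π.norm.natAbs) : Prime π := by
  rw [← irreducible_iff_prime]
  constructor
  · intro hu
    have h1 : π.norm.natAbs = 1 := Zsqrtd.norm_eq_one_iff.mpr hu
    rw [h1] at hp
    exact Nat.not_prime_one hp
  · intro a b hab
    have hmul : π.norm.natAbs = a.norm.natAbs * b.norm.natAbs := by
      rw [hab, Zsqrtd.norm_mul, Int.natAbs_mul]
    rcases (Nat.Prime.eq_one_or_self_of_dvd hp a.norm.natAbs ⟨b.norm.natAbs, hmul⟩) with h | h
    · exact Or.inl (Zsqrtd.norm_eq_one_iff.mp h)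
    · right
      apply Zsqrtd.norm_eq_one_iff.mp
      rw [h] at hmul
      exact (Nat.eq_of_mul_eq_mul_left hp.pos (by rw [mul_one, ← hmul])).symm

end R3Aux

namespace R3Aux

lemma norm_natAbs_eq {π : GaussianInt} {p : ℕ} (hπ : π.norm = (p : ℤ)) :
    π.norm.natAbs = p := by rw [hπ]; exact Int.natAbs_natCast p

set_option synthInstance.maxHeartbeats 1000000 in
lemma exists_pi {p : ℕ} (hp : p.Prime) (h1 : p % 4 = 1) :
    ∃ π : GaussianInt, π.norm = (p : ℤ) := by
  haveI : Fact p.Prime := ⟨hp⟩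
  have hnp : ¬ Prime ((p : ℕ) : GaussianInt) := by
    rw [GaussianInt.prime_iff_mod_four_eq_three_of_nat_prime p]
    omega
  have hni : ¬ Irreducible ((p : ℕ) : GaussianInt) := by
    intro h
    exact hnp (irreducible_iff_prime.mp h)
  obtain ⟨a, b, hab⟩ := GaussianInt.sq_add_sq_of_nat_prime_of_not_irreducible p hni
  refine ⟨⟨(a : ℤ), (b : ℤ)⟩, ?_⟩
  rw [Zsqrtd.norm_def]
  push_cast [← hab]
  ring

lemma norm_dvd_norm {x y : GaussianInt} (h : x ∣ y) : x.norm ∣ y.norm := by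
  obtain ⟨c, rfl⟩ := h
  exact ⟨c.norm, Zsqrtd.norm_mul x c⟩

lemma not_dvd_star {p : ℕ} (hp : p.Prime) (h1 : p % 4 = 1) {π : GaussianInt}
    (hπ : π.norm = (p : ℤ)) : ¬ π ∣ star π := by
  intro hdvd
  have hπp : Prime π := prime_of_norm_prime (by rw [norm_natAbs_eq hπ]; exact hp)
  have hsp : Prime (star π) :=
    prime_of_norm_prime (by rw [Zsqrtd.norm_conj, norm_natAbs_eq hπ]; exact hp)
  have hassoc := hπp.irreducible.associated_of_dvd hsp.irreducible hdvd
  obtain ⟨u, hu⟩ := hassoc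
  -- helper facts
  have haux1 : ∀ c : ℤ, (p : ℤ) ≠ c * c := by
    intro c hc
    have h' : p = c.natAbs * c.natAbs := by
      have := congrArg Int.natAbs hc
      rwa [Int.natAbs_natCast, Int.natAbs_mul] at this
    have h2le := hp.two_le
    rcases hp.eq_one_or_self_of_dvd c.natAbs ⟨c.natAbs, h'⟩ with h | h
    · rw [h] at h'; omega
    · rw [h] at h'
      have := Nat.eq_of_mul_eq_mul_left hp.pos (by rw [mul_one, ← h'] : p * 1 = p * p)
      omega
  have haux2 : ∀ c : ℤ, (p : ℤ) ≠ 2 * (c * c) := by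
    intro c hc
    have h' : p = 2 * (c.natAbs * c.natAbs) := by
      have := congrArg Int.natAbs hc
      rwa [Int.natAbs_natCast, Int.natAbs_mul, Int.natAbs_mul] at this
    have h2 : (2 : ℕ) ∣ p := ⟨_, h'⟩
    rcases hp.eq_one_or_self_of_dvd 2 h2 with h | h
    · omega
    · omega
  have hnormdef : π.re * π.re + π.im * π.im = (p : ℤ) := by
    have := hπ; rw [Zsqrtd.norm_def] at this; linarith
  rw [Zsqrtd.ext_iff] at hu
  rcases unit_cases u.isUnit with ⟨h2, h3⟩ | ⟨h2, h3⟩ | ⟨h2, h3⟩ | ⟨h2, h3⟩ <;>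
    simp only [Zsqrtd.re_mul, Zsqrtd.im_mul, Zsqrtd.re_star, Zsqrtd.im_star, h2, h3] at hu <;>
    obtain ⟨e1, e2⟩ := hu <;> ring_nf at e1 e2
  · -- u = 1 : π.im = 0, p = re²
    have : π.im = 0 := by linarith
    exact haux1 π.re (by rw [← hnormdef, this]; ring)
  · -- u = -1 : π.re = 0
    have : π.re = 0 := by linarith
    exact haux1 π.im (by rw [← hnormdef, this]; ring)
  · -- u = i : re = -im
    have : π.re = -π.im := by linarith
    exact haux2 π.im (by rw [← hnormdef, this]; ring)
  · -- u = -i : re = im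
    have : π.re = π.im := by linarith
    exact haux2 π.im (by rw [← hnormdef, this]; ring)

end R3Aux

namespace R3Aux

lemma norm_pow' (x : GaussianInt) (n : ℕ) : (x ^ n).norm = x.norm ^ n := by
  induction n with
  | zero => simp
  | succ n ih => rw [pow_succ, Zsqrtd.norm_mul, ih, pow_succ]

set_option maxHeartbeats 1000000 in
lemma sol_card_le_of_one_mod_four {p e k : ℕ} (hp : p.Prime) (h1 : p % 4 = 1)
    (hk : ¬ p ∣ k) (hk0 : 0 < k) :
    (sol (p ^ e * k)).card ≤ (e + 1) * (sol k).card := by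
  obtain ⟨π, hπ⟩ := exists_pi hp h1
  have hπp : Prime π := prime_of_norm_prime (by rw [norm_natAbs_eq hπ]; exact hp)
  have hsp : Prime (star π) :=
    prime_of_norm_prime (by rw [Zsqrtd.norm_conj, norm_natAbs_eq hπ]; exact hp)
  have hne : ¬ π ∣ star π := not_dvd_star hp h1 hπ
  have hne' : ¬ star π ∣ π := by
    intro h
    obtain ⟨c, hc⟩ := h
    refine hne ⟨star c, ?_⟩
    calc star π = star (star π * c) := by rw [← hc]
      _ = π * star c := by rw [star_mul, star_star]; ring
  have hpfact : ((p : ℕ) : GaussianInt) = π * star π := by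
    have h2 := Zsqrtd.norm_eq_mul_conj π
    rw [hπ] at h2
    exact_mod_cast h2
  have hπk : ¬ π ∣ ((k : ℕ) : GaussianInt) := by
    intro h
    have h2 := norm_dvd_norm h
    rw [hπ, Zsqrtd.norm_natCast] at h2
    have h3 : (p : ℤ) ∣ (k : ℤ) * (k : ℤ) := h2
    have h4 : p ∣ k * k := by exact_mod_cast h3
    exact hk (hp.dvd_of_dvd_pow (n := 2) (by rwa [sq]))
  have hsk : ¬ star π ∣ ((k : ℕ) : GaussianInt) := by
    intro h
    have h2 := norm_dvd_norm h
    rw [Zsqrtd.norm_conj, hπ, Zsqrtd.norm_natCast] at h2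
    have h3 : (p : ℤ) ∣ (k : ℤ) * (k : ℤ) := h2
    have h4 : p ∣ k * k := by exact_mod_cast h3
    exact hk (hp.dvd_of_dvd_pow (n := 2) (by rwa [sq]))
  have hm0 : 0 < p ^ e * k := Nat.mul_pos (Nat.pow_pos hp.pos) hk0
  have hmfact : ((p ^ e * k : ℕ) : GaussianInt) = π ^ e * ((star π) ^ e * (k : GaussianInt)) := by
    push_cast
    rw [hpfact]
    ring
  have keyfact : ∀ t : ℤ × ℤ, t ∈ sol (p ^ e * k) →
      multiplicity π (⟨t.1, t.2⟩ : GaussianInt) ≤ e ∧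
      (π ^ (multiplicity π (⟨t.1, t.2⟩ : GaussianInt)) *
          (star π) ^ (e - multiplicity π (⟨t.1, t.2⟩ : GaussianInt))) *
        ((⟨t.1, t.2⟩ : GaussianInt) /
          (π ^ (multiplicity π (⟨t.1, t.2⟩ : GaussianInt)) *
            (star π) ^ (e - multiplicity π (⟨t.1, t.2⟩ : GaussianInt)))) =
        (⟨t.1, t.2⟩ : GaussianInt) ∧
      (((⟨t.1, t.2⟩ : GaussianInt) /
          (π ^ (multiplicity π (⟨t.1, t.2⟩ : GaussianInt)) *
            (star π) ^ (e - multiplicity π (⟨t.1, t.2⟩ : GaussianInt)))).re,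
       ((⟨t.1, t.2⟩ : GaussianInt) /
          (π ^ (multiplicity π (⟨t.1, t.2⟩ : GaussianInt)) *
            (star π) ^ (e - multiplicity π (⟨t.1, t.2⟩ : GaussianInt)))).im) ∈ sol k := by
    intro t ht
    rw [mem_sol] at ht
    set z : GaussianInt := (⟨t.1, t.2⟩ : GaussianInt) with hzdef
    have hzre : z.re = t.1 := rfl
    have hzim : z.im = t.2 := rfl
    have hnz : z.norm = ((p ^ e * k : ℕ) : ℤ) := by
      rw [Zsqrtd.norm_def, hzre, hzim, ← ht]
      ring
    have hz0 : z ≠ 0 := by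
      intro h
      rw [h, Zsqrtd.norm_zero] at hnz
      have : (0 : ℤ) < ((p ^ e * k : ℕ) : ℤ) := by exact_mod_cast hm0
      omega
    have hfin : FiniteMultiplicity π z :=
      FiniteMultiplicity.of_not_isUnit hπp.not_isUnit hz0
    set j := multiplicity π z with hj
    have hjd : π ^ j ∣ z := pow_multiplicity_dvd π z
    have hmz : ((p ^ e * k : ℕ) : GaussianInt) = z * star z := by
      have h2 := Zsqrtd.norm_eq_mul_conj z
      rw [hnz] at h2
      exact_mod_cast h2
    have hzdvdm : z ∣ ((p ^ e * k : ℕ) : GaussianInt) := by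
      rw [hmz]; exact dvd_mul_right _ _
    have hje : j ≤ e := by
      by_contra hlt
      push_neg at hlt
      have h1 : π ^ (e + 1) ∣ ((p ^ e * k : ℕ) : GaussianInt) :=
        dvd_trans (pow_dvd_pow π hlt) (hjd.trans hzdvdm)
      rw [hmfact, pow_succ] at h1
      have h2 : π ∣ (star π) ^ e * (k : GaussianInt) :=
        (mul_dvd_mul_iff_left (pow_ne_zero e hπp.ne_zero)).mp h1
      rcases hπp.dvd_or_dvd h2 with h3 | h3
      · exact hne (hπp.dvd_of_dvd_pow h3)
      · exact hπk h3
    obtain ⟨y, hy, hyd⟩ := hfin.exists_eq_pow_mul_and_not_dvd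
    have hsy : ¬ star π ∣ star y := by
      intro h
      obtain ⟨c, hc⟩ := h
      refine hyd ⟨star c, ?_⟩
      calc y = star (star y) := (star_star y).symm
        _ = star (star π * c) := by rw [← hc]
        _ = π * star c := by rw [star_mul, star_star]; ring
    have hkey : (star π) ^ (e - j) ∣ y := by
      have h2 : ((p ^ e * k : ℕ) : GaussianInt) =
          (star π) ^ j * (π ^ j * (y * star y)) := by
        rw [hmz, hy, star_mul, star_pow]
        ring
      have h1 : (star π) ^ e ∣ ((p ^ e * k : ℕ) : GaussianInt) :=
        ⟨π ^ e * (k : GaussianInt), by rw [hmfact]; ring⟩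
      rw [h2, show e = j + (e - j) by omega, pow_add] at h1
      have h3 : (star π) ^ (e - j) ∣ π ^ j * (y * star y) :=
        (mul_dvd_mul_iff_left (pow_ne_zero j hsp.ne_zero)).mp h1
      have h4 : (star π) ^ (e - j) ∣ y * star y :=
        hsp.pow_dvd_of_dvd_mul_left _ (fun hh => hne' (hsp.dvd_of_dvd_pow hh)) h3
      exact hsp.pow_dvd_of_dvd_mul_right _ hsy h4
    have hdvd : π ^ j * (star π) ^ (e - j) ∣ z := by
      rw [hy]
      exact mul_dvd_mul_left _ hkey
    set q := π ^ j * (star π) ^ (e - j) with hq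
    have hq0 : q ≠ 0 := mul_ne_zero (pow_ne_zero _ hπp.ne_zero) (pow_ne_zero _ hsp.ne_zero)
    have hwz : q * (z / q) = z := EuclideanDomain.mul_div_cancel' hq0 hdvd
    have hnq : q.norm = (p : ℤ) ^ e := by
      rw [hq, Zsqrtd.norm_mul, norm_pow', norm_pow', Zsqrtd.norm_conj, hπ, ← pow_add]
      congr 1
      omega
    have hnw : (z / q).norm = (k : ℤ) := by
      have h2 : q.norm * (z / q).norm = ((p ^ e * k : ℕ) : ℤ) := by
        rw [← Zsqrtd.norm_mul, hwz, hnz]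
      rw [hnq] at h2
      push_cast at h2
      have hpe0 : ((p : ℤ)) ^ e ≠ 0 := pow_ne_zero e (by exact_mod_cast hp.pos.ne')
      exact mul_left_cancel₀ hpe0 (by rw [h2])
    refine ⟨hje, hwz, ?_⟩
    rw [mem_sol]
    have := hnw
    rw [Zsqrtd.norm_def] at this
    simp only
    linear_combination this
  have hcard : ((Finset.range (e + 1)) ×ˢ sol k).card = (e + 1) * (sol k).card := by
    rw [Finset.card_product, Finset.card_range]
  rw [← hcard]
  apply Finset.card_le_card_of_injOn (fun t =>
    (multiplicity π (⟨t.1, t.2⟩ : GaussianInt),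
      (((⟨t.1, t.2⟩ : GaussianInt) /
          (π ^ (multiplicity π (⟨t.1, t.2⟩ : GaussianInt)) *
            (star π) ^ (e - multiplicity π (⟨t.1, t.2⟩ : GaussianInt)))).re,
       ((⟨t.1, t.2⟩ : GaussianInt) /
          (π ^ (multiplicity π (⟨t.1, t.2⟩ : GaussianInt)) *
            (star π) ^ (e - multiplicity π (⟨t.1, t.2⟩ : GaussianInt)))).im)))
  · intro t ht
    simp only [Finset.mem_coe] at ht
    obtain ⟨hje, _, hmem⟩ := keyfact t ht
    simp only [Finset.mem_coe, Finset.mem_product, Finset.mem_range]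
    exact ⟨by omega, hmem⟩
  · intro t1 ht1 t2 ht2 heq
    simp only [Finset.mem_coe] at ht1 ht2
    obtain ⟨hje1, hwz1, _⟩ := keyfact t1 ht1
    obtain ⟨hje2, hwz2, _⟩ := keyfact t2 ht2
    simp only [Prod.mk.injEq] at heq
    obtain ⟨hj12, hw1, hw2⟩ := heq
    have hweq : ((⟨t1.1, t1.2⟩ : GaussianInt) /
          (π ^ (multiplicity π (⟨t1.1, t1.2⟩ : GaussianInt)) *
            (star π) ^ (e - multiplicity π (⟨t1.1, t1.2⟩ : GaussianInt)))) =
        ((⟨t2.1, t2.2⟩ : GaussianInt) /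
          (π ^ (multiplicity π (⟨t2.1, t2.2⟩ : GaussianInt)) *
            (star π) ^ (e - multiplicity π (⟨t2.1, t2.2⟩ : GaussianInt)))) := by
      rw [Zsqrtd.ext_iff]
      exact ⟨hw1, hw2⟩
    have hzeq : (⟨t1.1, t1.2⟩ : GaussianInt) = (⟨t2.1, t2.2⟩ : GaussianInt) := by
      calc (⟨t1.1, t1.2⟩ : GaussianInt)
          = (π ^ (multiplicity π (⟨t1.1, t1.2⟩ : GaussianInt)) *
              (star π) ^ (e - multiplicity π (⟨t1.1, t1.2⟩ : GaussianInt))) *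
            ((⟨t1.1, t1.2⟩ : GaussianInt) /
              (π ^ (multiplicity π (⟨t1.1, t1.2⟩ : GaussianInt)) *
                (star π) ^ (e - multiplicity π (⟨t1.1, t1.2⟩ : GaussianInt)))) := hwz1.symm
        _ = (π ^ (multiplicity π (⟨t2.1, t2.2⟩ : GaussianInt)) *
              (star π) ^ (e - multiplicity π (⟨t2.1, t2.2⟩ : GaussianInt))) *
            ((⟨t2.1, t2.2⟩ : GaussianInt) /
              (π ^ (multiplicity π (⟨t2.1, t2.2⟩ : GaussianInt)) *
                (star π) ^ (e - multiplicity π (⟨t2.1, t2.2⟩ : GaussianInt)))) := by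
              rw [hweq, hj12]
        _ = (⟨t2.1, t2.2⟩ : GaussianInt) := hwz2
    have h1 := congrArg Zsqrtd.re hzeq
    have h2 := congrArg Zsqrtd.im hzeq
    exact Prod.ext h1 h2

end R3Aux

namespace R3Aux

lemma sol_one_card : (sol 1).card = 4 := by decide

lemma sol_card_le_four_mul : ∀ m : ℕ, 0 < m → (sol m).card ≤ 4 * m.divisors.card := by
  intro m
  induction m using Nat.strong_induction_on with
  | _ m ih =>
  intro hm
  by_cases h1 : m = 1
  · subst h1
    rw [sol_one_card, Nat.divisors_one]
    simp
  have h2 : 2 ≤ m := by omega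
  set p := m.minFac with hpdef
  have hp : p.Prime := Nat.minFac_prime (by omega)
  have hpm : p ∣ m := Nat.minFac_dvd m
  have hcases : p = 2 ∨ p % 4 = 1 ∨ p % 4 = 3 := by
    rcases hp.eq_two_or_odd' with h | h
    · exact Or.inl h
    · rw [Nat.odd_iff] at h
      omega
  rcases hcases with hcase | hcase | hcase
  · -- p = 2
    obtain ⟨c, hc⟩ := hpm
    rw [hcase] at hc
    subst hc
    have hc0 : 0 < c := by omega
    calc (sol (2 * c)).card ≤ (sol c).card := sol_card_le_of_two
      _ ≤ 4 * c.divisors.card := ih c (by omega) hc0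
      _ ≤ 4 * (2 * c).divisors.card := by
          refine Nat.mul_le_mul_left 4 (Finset.card_le_card ?_)
          exact Nat.divisors_subset_of_dvd (by omega) ⟨2, by ring⟩
  · -- p % 4 = 1
    set e := m.factorization p with he
    set c := m / p ^ e with hcdef
    have hfact : p ^ e * c = m := Nat.ordProj_mul_ordCompl_eq_self m p
    have hndvd : ¬ p ∣ c := Nat.not_dvd_ordCompl hp (by omega)
    have he1 : 1 ≤ e := hp.factorization_pos_of_dvd (by omega) hpm
    have hc0 : 0 < c := by
      rcases Nat.eq_zero_or_pos c with h | h
      · rw [h, mul_zero] at hfact; omega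
      · exact h
    have hpe : 2 ≤ p ^ e := by
      calc 2 ≤ p := hp.two_le
        _ ≤ p ^ e := Nat.le_self_pow (by omega) p
    have hclt : c < m := by nlinarith
    have hcop : (p ^ e).Coprime c := Nat.Coprime.pow_left e (hp.coprime_iff_not_dvd.mpr hndvd)
    have hdpe : (p ^ e).divisors.card = e + 1 := by
      rw [Nat.divisors_prime_pow hp, Finset.card_map, Finset.card_range]
    calc (sol m).card = (sol (p ^ e * c)).card := by rw [hfact]
      _ ≤ (e + 1) * (sol c).card := sol_card_le_of_one_mod_four hp hcase hndvd hc0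
      _ ≤ (e + 1) * (4 * c.divisors.card) := Nat.mul_le_mul_left _ (ih c hclt hc0)
      _ = 4 * ((p ^ e).divisors.card * c.divisors.card) := by rw [hdpe]; ring
      _ = 4 * ((p ^ e * c).divisors.card) := by rw [hcop.card_divisors_mul]
      _ = 4 * m.divisors.card := by rw [hfact]
  · -- p % 4 = 3
    by_cases hsq : p ^ 2 ∣ m
    · obtain ⟨c, hc⟩ := hsq
      have hp2 : 2 ≤ p ^ 2 := by nlinarith [hp.two_le]
      have hc0 : 0 < c := by
        rcases Nat.eq_zero_or_pos c with h | h
        · rw [h, mul_zero] at hc; omega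
        · exact h
      calc (sol m).card = (sol (p ^ 2 * c)).card := by rw [← hc]
        _ ≤ (sol c).card := sol_card_le_of_three_mod_four hp hcase
        _ ≤ 4 * c.divisors.card := ih c (by nlinarith) hc0
        _ ≤ 4 * m.divisors.card := by
            refine Nat.mul_le_mul_left 4 (Finset.card_le_card ?_)
            exact Nat.divisors_subset_of_dvd (by omega) ⟨p ^ 2, by rw [hc]; ring⟩
    · rw [sol_eq_empty_of_three_mod_four hp hcase hpm hsq]
      simp

end R3Aux

namespace R3Aux

open Real

lemma nat_add_one_le_exp {δ : ℝ} (hδ : 0 < δ) (x : ℝ) (hx : 0 ≤ x) :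
    x + 1 ≤ (1 + 1 / δ) * Real.exp (δ * x) := by
  have h1 : δ * x + 1 ≤ Real.exp (δ * x) := Real.add_one_le_exp (δ * x)
  have h2 : (1 : ℝ) ≤ Real.exp (δ * x) := by
    rw [show (1:ℝ) = Real.exp 0 from (Real.exp_zero).symm]
    exact Real.exp_le_exp.mpr (by positivity)
  rw [← sub_nonneg]
  have key : (1 + 1 / δ) * Real.exp (δ * x) - (x + 1) =
      ((Real.exp (δ * x) - (δ * x + 1)) + δ * (Real.exp (δ * x) - 1) + 1) / δ := by
    field_simp
    ring
  rw [key]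
  apply div_nonneg _ hδ.le
  nlinarith [mul_nonneg hδ.le (by linarith : (0:ℝ) ≤ Real.exp (δ * x) - 1)]

/-- The divisor bound: `d(m) ≪_ε m^ε`. -/
lemma divisor_bound {ε : ℝ} (hε : 0 < ε) :
    ∃ C : ℝ, 1 ≤ C ∧ ∀ m : ℕ, 0 < m → ((m.divisors.card : ℝ)) ≤ C * (m : ℝ) ^ ε := by
  set δ := ε * Real.log 2 with hδdef
  have hδ : 0 < δ := mul_pos hε (Real.log_pos one_lt_two)
  set A := 1 + 1 / δ with hAdef
  have hA : 1 ≤ A := by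
    rw [hAdef]
    have : 0 < 1 / δ := by positivity
    linarith
  set T : ℝ := (2 : ℝ) ^ (1 / ε) with hTdef
  set P := ⌈T⌉₊ with hPdef
  refine ⟨A ^ P, by simpa using pow_le_pow_left₀ (by norm_num : (0:ℝ) ≤ 1) hA P, ?_⟩
  intro m hm
  classical
  rw [Nat.card_divisors hm.ne']
  push_cast
  have hbound : ∀ p ∈ m.primeFactors,
      ((m.factorization p : ℝ) + 1) ≤
        (if (p : ℝ) < T then A else 1) * (p : ℝ) ^ (ε * (m.factorization p : ℝ)) := by
    intro p hp
    have hpp := Nat.prime_of_mem_primeFactors hp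
    have hp2 : (2 : ℝ) ≤ (p : ℝ) := by exact_mod_cast hpp.two_le
    set t := m.factorization p with ht
    by_cases hsmall : (p : ℝ) < T
    · rw [if_pos hsmall]
      have h1 : (t : ℝ) + 1 ≤ A * Real.exp (δ * t) :=
        nat_add_one_le_exp hδ t (Nat.cast_nonneg t)
      have h2 : Real.exp (δ * t) = (2 : ℝ) ^ (ε * (t : ℝ)) := by
        rw [Real.rpow_def_of_pos (by norm_num : (0:ℝ) < 2)]
        congr 1
        rw [hδdef]
        ring
      have h3 : (2 : ℝ) ^ (ε * (t : ℝ)) ≤ (p : ℝ) ^ (ε * (t : ℝ)) :=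
        Real.rpow_le_rpow (by norm_num) hp2 (by positivity)
      calc (t : ℝ) + 1 ≤ A * Real.exp (δ * t) := h1
        _ = A * (2 : ℝ) ^ (ε * (t : ℝ)) := by rw [h2]
        _ ≤ A * (p : ℝ) ^ (ε * (t : ℝ)) := by
            exact mul_le_mul_of_nonneg_left h3 (by linarith)
    · rw [if_neg hsmall]
      push_neg at hsmall
      have hp_eps : (2 : ℝ) ≤ (p : ℝ) ^ ε := by
        have h1 : T ^ ε ≤ (p : ℝ) ^ ε :=
          Real.rpow_le_rpow (by positivity) hsmall hε.le
        have h2 : T ^ ε = 2 := by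
          rw [hTdef, ← Real.rpow_mul (by norm_num : (0:ℝ) ≤ 2)]
          rw [one_div_mul_cancel hε.ne', Real.rpow_one]
        linarith
      have h1 : (t : ℝ) + 1 ≤ (2 : ℝ) ^ (t : ℕ) := by
        have := Nat.lt_two_pow_self (n := t)
        have h2 : (t : ℝ) + 1 ≤ ((2 ^ t : ℕ) : ℝ) := by exact_mod_cast this
        push_cast at h2
        exact h2
      have h2 : ((2 : ℝ)) ^ (t : ℕ) ≤ ((p : ℝ) ^ ε) ^ (t : ℕ) :=
        pow_le_pow_left₀ (by norm_num) hp_eps t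
      have h3 : ((p : ℝ) ^ ε) ^ (t : ℕ) = (p : ℝ) ^ (ε * (t : ℝ)) := by
        rw [← Real.rpow_natCast ((p : ℝ) ^ ε) t, ← Real.rpow_mul (by positivity)]
      rw [one_mul]
      calc (t : ℝ) + 1 ≤ (2 : ℝ) ^ (t : ℕ) := h1
        _ ≤ ((p : ℝ) ^ ε) ^ (t : ℕ) := h2
        _ = (p : ℝ) ^ (ε * (t : ℝ)) := h3
  have hprod := Finset.prod_le_prod (s := m.primeFactors)
    (f := fun p => ((m.factorization p : ℝ) + 1))
    (g := fun p => (if (p : ℝ) < T then A else 1) * (p : ℝ) ^ (ε * (m.factorization p : ℝ)))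
    (fun p _ => by positivity) hbound
  rw [Finset.prod_mul_distrib] at hprod
  have hprod1 : (∏ p ∈ m.primeFactors, (if (p : ℝ) < T then A else 1)) ≤ A ^ P := by
    rw [Finset.prod_ite, Finset.prod_const, Finset.prod_const_one, mul_one]
    have hsub : m.primeFactors.filter (fun (p : ℕ) => (p : ℝ) < T) ⊆ Finset.range P := by
      intro p hp
      rw [Finset.mem_filter] at hp
      rw [Finset.mem_range, hPdef]
      exact Nat.lt_ceil.mpr hp.2
    calc A ^ (m.primeFactors.filter (fun (p : ℕ) => (p : ℝ) < T)).card
        ≤ A ^ (Finset.range P).card := pow_le_pow_right₀ hA (Finset.card_le_card hsub)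
      _ = A ^ P := by rw [Finset.card_range]
  have hprod2 : (∏ p ∈ m.primeFactors, (p : ℝ) ^ (ε * (m.factorization p : ℝ))) =
      (m : ℝ) ^ ε := by
    have step1 : ∀ p ∈ m.primeFactors,
        (p : ℝ) ^ (ε * (m.factorization p : ℝ)) =
          (((p ^ m.factorization p : ℕ) : ℝ)) ^ ε := by
      intro p hp
      rw [mul_comm, Real.rpow_mul (by positivity), Real.rpow_natCast]
      push_cast
      ring
    rw [Finset.prod_congr rfl step1]
    rw [Real.finset_prod_rpow _ _ (fun p _ => by positivity) ε]
    congr 1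
    rw [← Nat.cast_prod]
    congr 1
    have := Nat.factorization_prod_pow_eq_self hm.ne'
    rw [Finsupp.prod] at this
    rw [← Nat.support_factorization]
    exact this
  calc (∏ p ∈ m.primeFactors, ((m.factorization p : ℝ) + 1))
      ≤ (∏ p ∈ m.primeFactors, (if (p : ℝ) < T then A else 1)) *
        (∏ p ∈ m.primeFactors, (p : ℝ) ^ (ε * (m.factorization p : ℝ))) := hprod
    _ ≤ A ^ P * (m : ℝ) ^ ε := by
        rw [hprod2]
        exact mul_le_mul_of_nonneg_right hprod1 (by positivity)

end R3Aux

namespace R3Aux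

lemma sol_zero_card : (sol 0).card = 1 := by decide

end R3Aux

/-- `r₃(n) = #{(n₁,n₂,n₃) ∈ ℤ³ : n₁² + n₂² + n₃² = n}`. -/
noncomputable def r3 (n : ℕ) : ℕ :=
  ((Finset.Icc (-(n : ℤ)) (n : ℤ) ×ˢ Finset.Icc (-(n : ℤ)) (n : ℤ) ×ˢ
      Finset.Icc (-(n : ℤ)) (n : ℤ)).filter
    (fun t => t.1 ^ 2 + t.2.1 ^ 2 + t.2.2 ^ 2 = (n : ℤ))).card

/-- `r₃(n) ≪_ε n^{1/2+ε}`. -/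
theorem r3_bound : ∀ ε : ℝ, 0 < ε → ∃ C : ℝ, 0 < C ∧
    ∀ n : ℕ, 0 < n → (r3 n : ℝ) ≤ C * (n : ℝ) ^ ((1 : ℝ) / 2 + ε) := by
  intro ε hε
  obtain ⟨C, hC1, hC⟩ := R3Aux.divisor_bound hε
  refine ⟨12 * C, by linarith, ?_⟩
  intro n hn
  set s := Nat.sqrt n with hsdef
  -- Step 1 : slice by the first coordinate
  have hsub : r3 n ≤ ∑ a ∈ Finset.Icc (-(s : ℤ)) (s : ℤ),
      (sol (((n : ℤ) - a ^ 2).toNat)).card := by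
    rw [r3]
    have h1 : (Finset.Icc (-(n : ℤ)) (n : ℤ) ×ˢ Finset.Icc (-(n : ℤ)) (n : ℤ) ×ˢ
        Finset.Icc (-(n : ℤ)) (n : ℤ)).filter
          (fun t => t.1 ^ 2 + t.2.1 ^ 2 + t.2.2 ^ 2 = (n : ℤ)) ⊆
        (Finset.Icc (-(s : ℤ)) (s : ℤ)).biUnion
          (fun a => ({a} : Finset ℤ) ×ˢ sol (((n : ℤ) - a ^ 2).toNat)) := by
      intro t ht
      simp only [Finset.mem_filter, Finset.mem_product, Finset.mem_Icc] at ht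
      obtain ⟨-, heq⟩ := ht
      rw [Finset.mem_biUnion]
      refine ⟨t.1, ?_, ?_⟩
      · rw [Finset.mem_Icc]
        have hsq : t.1 ^ 2 ≤ (n : ℤ) := by nlinarith [sq_nonneg t.2.1, sq_nonneg t.2.2]
        have habs : t.1.natAbs ≤ s := by
          rw [hsdef, Nat.le_sqrt]
          have h2 : ((t.1.natAbs * t.1.natAbs : ℕ) : ℤ) ≤ (n : ℤ) := by
            rw [Int.natAbs_mul_self]
            nlinarith
          exact_mod_cast h2
        omega
      · rw [Finset.mem_product]
        refine ⟨Finset.mem_singleton_self _, ?_⟩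
        rw [mem_sol]
        have h0 : (0 : ℤ) ≤ (n : ℤ) - t.1 ^ 2 := by
          nlinarith [sq_nonneg t.2.1, sq_nonneg t.2.2]
        rw [Int.toNat_of_nonneg h0]
        linarith
    calc _ ≤ ((Finset.Icc (-(s : ℤ)) (s : ℤ)).biUnion
          (fun a => ({a} : Finset ℤ) ×ˢ sol (((n : ℤ) - a ^ 2).toNat))).card :=
        Finset.card_le_card h1
      _ ≤ ∑ a ∈ Finset.Icc (-(s : ℤ)) (s : ℤ),
          (({a} : Finset ℤ) ×ˢ sol (((n : ℤ) - a ^ 2).toNat)).card :=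
        Finset.card_biUnion_le
      _ = ∑ a ∈ Finset.Icc (-(s : ℤ)) (s : ℤ), (sol (((n : ℤ) - a ^ 2).toNat)).card := by
        refine Finset.sum_congr rfl fun a _ => ?_
        rw [Finset.card_product, Finset.card_singleton, one_mul]
  -- Step 2 : each slice has few points
  have hterm : ∀ a : ℤ, ((sol (((n : ℤ) - a ^ 2).toNat)).card : ℝ) ≤ 4 * C * (n : ℝ) ^ ε := by
    intro a
    have hnε : (1 : ℝ) ≤ (n : ℝ) ^ ε :=
      Real.one_le_rpow (by exact_mod_cast hn) hε.le
    set mA := ((n : ℤ) - a ^ 2).toNat with hmA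
    have hmAn : mA ≤ n := by
      rw [hmA]
      have : (n : ℤ) - a ^ 2 ≤ (n : ℤ) := by nlinarith [sq_nonneg a]
      omega
    rcases Nat.eq_zero_or_pos mA with h | hpos
    · rw [h, R3Aux.sol_zero_card]
      have h4 : (1 : ℝ) * 1 ≤ C * (n : ℝ) ^ ε :=
        mul_le_mul hC1 hnε (by norm_num) (by linarith)
      push_cast
      nlinarith
    · have h1 : ((sol mA).card : ℝ) ≤ 4 * (mA.divisors.card : ℝ) := by
        exact_mod_cast R3Aux.sol_card_le_four_mul mA hpos
      have h2 : ((mA.divisors.card : ℝ)) ≤ C * (mA : ℝ) ^ ε := hC mA hpos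
      have h3 : ((mA : ℝ)) ^ ε ≤ ((n : ℝ)) ^ ε :=
        Real.rpow_le_rpow (by positivity) (by exact_mod_cast hmAn) hε.le
      calc ((sol mA).card : ℝ) ≤ 4 * (mA.divisors.card : ℝ) := h1
        _ ≤ 4 * (C * (mA : ℝ) ^ ε) := by linarith
        _ ≤ 4 * (C * (n : ℝ) ^ ε) := by nlinarith
        _ = 4 * C * (n : ℝ) ^ ε := by ring
  -- Step 3 : count the slices
  have hcard : ((Finset.Icc (-(s : ℤ)) (s : ℤ)).card : ℝ) = 2 * (s : ℝ) + 1 := by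
    rw [Int.card_Icc]
    have : ((s : ℤ) + 1 - -(s : ℤ)).toNat = 2 * s + 1 := by omega
    rw [this]
    push_cast
    ring
  have hshalf : (s : ℝ) ≤ (n : ℝ) ^ ((1 : ℝ) / 2) := by
    rw [← Real.sqrt_eq_rpow]
    rw [Real.le_sqrt (by positivity) (by positivity)]
    have h2 : ((s ^ 2 : ℕ) : ℝ) ≤ ((n : ℕ) : ℝ) := by exact_mod_cast Nat.sqrt_le' n
    push_cast at h2
    nlinarith
  have hone : (1 : ℝ) ≤ (n : ℝ) ^ ((1 : ℝ) / 2) :=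
    Real.one_le_rpow (by exact_mod_cast hn) (by norm_num)
  -- Combine
  have hsum : (r3 n : ℝ) ≤ ((Finset.Icc (-(s : ℤ)) (s : ℤ)).card : ℝ) * (4 * C * (n : ℝ) ^ ε) := by
    have h1 : (r3 n : ℝ) ≤ ∑ a ∈ Finset.Icc (-(s : ℤ)) (s : ℤ),
        ((sol (((n : ℤ) - a ^ 2).toNat)).card : ℝ) := by
      have := hsub
      calc (r3 n : ℝ) ≤ ((∑ a ∈ Finset.Icc (-(s : ℤ)) (s : ℤ),
          (sol (((n : ℤ) - a ^ 2).toNat)).card : ℕ) : ℝ) := by exact_mod_cast hsub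
        _ = _ := by push_cast; rfl
    calc (r3 n : ℝ) ≤ ∑ a ∈ Finset.Icc (-(s : ℤ)) (s : ℤ),
          ((sol (((n : ℤ) - a ^ 2).toNat)).card : ℝ) := h1
      _ ≤ ∑ _a ∈ Finset.Icc (-(s : ℤ)) (s : ℤ), (4 * C * (n : ℝ) ^ ε) :=
        Finset.sum_le_sum (fun a _ => hterm a)
      _ = ((Finset.Icc (-(s : ℤ)) (s : ℤ)).card : ℝ) * (4 * C * (n : ℝ) ^ ε) := by
        rw [Finset.sum_const, nsmul_eq_mul]
  have hfinal : ((Finset.Icc (-(s : ℤ)) (s : ℤ)).card : ℝ) ≤ 3 * (n : ℝ) ^ ((1 : ℝ) / 2) := by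
    rw [hcard]
    linarith
  have hCn : (0 : ℝ) ≤ 4 * C * (n : ℝ) ^ ε := by positivity
  calc (r3 n : ℝ) ≤ ((Finset.Icc (-(s : ℤ)) (s : ℤ)).card : ℝ) * (4 * C * (n : ℝ) ^ ε) := hsum
    _ ≤ (3 * (n : ℝ) ^ ((1 : ℝ) / 2)) * (4 * C * (n : ℝ) ^ ε) :=
      mul_le_mul_of_nonneg_right hfinal hCn
    _ = 12 * C * ((n : ℝ) ^ ((1 : ℝ) / 2) * (n : ℝ) ^ ε) := by ring
    _ = 12 * C * (n : ℝ) ^ ((1 : ℝ) / 2 + ε) := by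
      rw [← Real.rpow_add (by exact_mod_cast hn)]
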